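/- On the two-boundary space H_{2b}, the central element Y takes the quantized value Y_M on highest-weight vectors: for every M ∈ ℤ and every v ∈ H_{2b} satisfying E_tot v = 0 and K_tot v = q^{α_l+α_r+N−2M−2} v, one has ((q^{α_l+α_r+1} + q^{−α_l−α_r−1})·v − C v) / ((q^{α_l}−q^{−α_l})(q^{α_r}−q^{−α_r})) = Y_M · v, where Y_M := [M+1−N/2]_q [α_l+α_r−M+N/2]_q / ([α_l]_q [α_r]_q). -/

import Mathlib

noncomputable section

/-- Basis labels of `(ℂ²)^{⊗N}`: a state (0 = ↑, 1 = ↓) for each of the `N` sites. -/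
abbrev Conf (N : ℕ) := Fin N → Fin 2

/-- The two-boundary space `H_{2b} = V_{α_l} ⊗ (ℂ²)^{⊗N} ⊗ V_{α_r}`, realised as finitely
supported complex functions on its basis labels `(n, f, m)`. -/
abbrev H2b (N : ℕ) := (ℕ × Conf N × ℕ) →₀ ℂ

/-- The basis vector `|n⟩ ⊗ |f⟩ ⊗ |m⟩` of `H_{2b}`. -/
def ket2 {N : ℕ} (n : ℕ) (f : Conf N) (m : ℕ) : H2b N := Finsupp.single (n, f, m) 1

/-- The linear operator on `H_{2b}` determined by its values on the basis vectors. -/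
def bigOp {N : ℕ} (t : ℕ → Conf N → ℕ → H2b N) : Module.End ℂ (H2b N) :=
  Finsupp.lsum ℂ fun p => LinearMap.toSpanSingleton ℂ (H2b N) (t p.1 p.2.1 p.2.2)

/-- The q-deformed number `[x]_q` with `q = e^h`. -/
def qnum (h x : ℂ) : ℂ :=
  (Complex.exp (h * x) - Complex.exp (-(h * x))) / (Complex.exp h - Complex.exp (-h))

/-- Total `σᶻ`-weight of a spin configuration. -/
def zW {N : ℕ} (f : Conf N) : ℤ := ∑ j, (1 - 2 * ((f j : ℕ) : ℤ))

/-- `σᶻ`-weight of the part of a spin configuration strictly after site `j`. -/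
def zWgt {N : ℕ} (f : Conf N) (j : Fin N) : ℤ :=
  ∑ k ∈ Finset.univ.filter (fun k => j < k), (1 - 2 * ((f k : ℕ) : ℤ))

/-- `σᶻ`-weight of the part of a spin configuration strictly before site `j`. -/
def zWlt {N : ℕ} (f : Conf N) (j : Fin N) : ℤ :=
  ∑ k ∈ Finset.univ.filter (fun k => k < j), (1 - 2 * ((f k : ℕ) : ℤ))

/-- The iterated coproduct `E_tot = Σ_i Id^{⊗(i−1)} ⊗ E ⊗ K^{⊗(N+2−i)}` on `H_{2b}`. -/
def Etot (N : ℕ) (h αl αr : ℂ) : Module.End ℂ (H2b N) :=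
  bigOp fun n f m =>
    (if n = 0 then 0 else
      (qnum h (n : ℂ) * qnum h (αl - (n : ℂ)) *
        Complex.exp (h * ((zW f : ℂ) + (αr - 1 - 2 * (m : ℂ))))) • ket2 (n - 1) f m)
    + (∑ j : Fin N, if f j = 1 then
        Complex.exp (h * ((zWgt f j : ℂ) + (αr - 1 - 2 * (m : ℂ)))) •
          ket2 n (Function.update f j 0) m else 0)
    + (if m = 0 then 0 else
        (qnum h (m : ℂ) * qnum h (αr - (m : ℂ))) • ket2 n f (m - 1))

/-- The iterated coproduct `F_tot = Σ_i (K⁻¹)^{⊗(i−1)} ⊗ F ⊗ Id^{⊗(N+2−i)}` on `H_{2b}`. -/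
def Ftot (N : ℕ) (h αl αr : ℂ) : Module.End ℂ (H2b N) :=
  bigOp fun n f m =>
    ket2 (n + 1) f m
    + (∑ j : Fin N, if f j = 0 then
        Complex.exp (-(h * ((αl - 1 - 2 * (n : ℂ)) + (zWlt f j : ℂ)))) •
          ket2 n (Function.update f j 1) m else 0)
    + Complex.exp (-(h * ((αl - 1 - 2 * (n : ℂ)) + (zW f : ℂ)))) • ket2 n f (m + 1)

/-- The total Cartan generator `K_tot = K ⊗ ⋯ ⊗ K` on `H_{2b}`. -/
def Ktot (N : ℕ) (h αl αr : ℂ) : Module.End ℂ (H2b N) :=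
  bigOp fun n f m =>
    Complex.exp (h * ((αl - 1 - 2 * (n : ℂ)) + (zW f : ℂ) + (αr - 1 - 2 * (m : ℂ)))) •
      ket2 n f m

/-- The inverse total Cartan generator `K_tot⁻¹` on `H_{2b}`. -/
def KtotInv (N : ℕ) (h αl αr : ℂ) : Module.End ℂ (H2b N) :=
  bigOp fun n f m =>
    Complex.exp (-(h * ((αl - 1 - 2 * (n : ℂ)) + (zW f : ℂ) + (αr - 1 - 2 * (m : ℂ))))) •
      ket2 n f m

/-- The Casimir operator `C = (q−q⁻¹)² F_tot E_tot + q K_tot + q⁻¹ K_tot⁻¹` on `H_{2b}`. -/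
def Casimir2b (N : ℕ) (h αl αr : ℂ) : Module.End ℂ (H2b N) :=
  (Complex.exp h - Complex.exp (-h)) ^ 2 • (Ftot N h αl αr * Etot N h αl αr)
    + Complex.exp h • Ktot N h αl αr + Complex.exp (-h) • KtotInv N h αl αr


lemma bigOp_ket2 {N : ℕ} (t : ℕ → Conf N → ℕ → H2b N) (n : ℕ) (f : Conf N) (m : ℕ) :
    bigOp t (ket2 n f m) = t n f m := by
  simp [bigOp, ket2]

lemma ktotinv_ktot (N : ℕ) (h αl αr : ℂ) (v : H2b N) :
    KtotInv N h αl αr (Ktot N h αl αr v) = v := by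
  induction v using Finsupp.induction_linear with
  | zero => simp
  | add f g hf hg => simp [map_add, hf, hg]
  | single p b =>
    obtain ⟨n, f, m⟩ := p
    have hp : (Finsupp.single (n, f, m) b : H2b N) = b • ket2 n f m := by
      simp [ket2, Finsupp.smul_single]
    rw [hp, map_smul, map_smul]
    have h1 : Ktot N h αl αr (ket2 n f m)
        = Complex.exp (h * ((αl - 1 - 2 * (n : ℂ)) + (zW f : ℂ) + (αr - 1 - 2 * (m : ℂ)))) •
          ket2 n f m := by
      simp [Ktot, bigOp_ket2]
    rw [h1, map_smul]
    have h2 : KtotInv N h αl αr (ket2 n f m)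
        = Complex.exp (-(h * ((αl - 1 - 2 * (n : ℂ)) + (zW f : ℂ) + (αr - 1 - 2 * (m : ℂ))))) •
          ket2 n f m := by
      simp [KtotInv, bigOp_ket2]
    rw [h2, smul_smul, smul_smul, mul_assoc, ← Complex.exp_add, add_neg_cancel,
      Complex.exp_zero, mul_one]

lemma scalar_id (A B L R Q : ℂ) (hA : A ≠ 0) (hB : B ≠ 0) (hL' : L - L⁻¹ ≠ 0)
    (hR' : R - R⁻¹ ≠ 0) (hQ' : Q - Q⁻¹ ≠ 0) :
    ((L - L⁻¹) * (R - R⁻¹))⁻¹ * (A * B + (A * B)⁻¹ - (B / A + (B / A)⁻¹))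
      = (A - A⁻¹) / (Q - Q⁻¹) * ((B - B⁻¹) / (Q - Q⁻¹)) /
          ((L - L⁻¹) / (Q - Q⁻¹) * ((R - R⁻¹) / (Q - Q⁻¹))) := by
  have hnum : A * B + (A * B)⁻¹ - (B / A + (B / A)⁻¹) = (A - A⁻¹) * (B - B⁻¹) := by
    field_simp
    ring
  have hdd : (Q - Q⁻¹) * (Q - Q⁻¹) ≠ 0 := mul_ne_zero hQ' hQ'
  have hden : (A - A⁻¹) / (Q - Q⁻¹) * ((B - B⁻¹) / (Q - Q⁻¹)) /
      ((L - L⁻¹) / (Q - Q⁻¹) * ((R - R⁻¹) / (Q - Q⁻¹)))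
      = (A - A⁻¹) * (B - B⁻¹) / ((L - L⁻¹) * (R - R⁻¹)) := by
    rw [div_mul_div_comm, div_mul_div_comm, div_div_div_eq,
      mul_comm ((A - A⁻¹) * (B - B⁻¹)) ((Q - Q⁻¹) * (Q - Q⁻¹)),
      mul_div_mul_left _ _ hdd]
  rw [hnum, hden, inv_mul_eq_div]

/-- On `H_{2b}`, the central element `Y` takes the quantized value `Y_M` on
highest-weight vectors of weight `q^{α_l+α_r+N−2M−2}`. -/
theorem Y_quantized_on_highest_weight_vectors (N : ℕ) (hN : 1 ≤ N) (h αl αr : ℂ)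
    (hq : Complex.exp h ^ 2 ≠ 1)
    (hαl : Complex.exp (h * αl) ≠ Complex.exp (-(h * αl)))
    (hαr : Complex.exp (h * αr) ≠ Complex.exp (-(h * αr))) :
    ∀ M : ℤ, ∀ v : H2b N,
      Etot N h αl αr v = 0 →
      Ktot N h αl αr v
        = Complex.exp (h * (αl + αr + (N : ℂ) - 2 * (M : ℂ) - 2)) • v →
      ((Complex.exp (h * αl) - Complex.exp (-(h * αl))) *
          (Complex.exp (h * αr) - Complex.exp (-(h * αr))))⁻¹ •
          ((Complex.exp (h * (αl + αr + 1)) + Complex.exp (-(h * (αl + αr + 1)))) • v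
            - Casimir2b N h αl αr v)
        = (qnum h ((M : ℂ) + 1 - (N : ℂ) / 2) * qnum h (αl + αr - (M : ℂ) + (N : ℂ) / 2) /
            (qnum h αl * qnum h αr)) • v := by
  intro M v hE hK
  have hc0 : Complex.exp (h * (αl + αr + (N : ℂ) - 2 * (M : ℂ) - 2)) ≠ 0 :=
    Complex.exp_ne_zero _
  have hKinv : KtotInv N h αl αr v
      = (Complex.exp (h * (αl + αr + (N : ℂ) - 2 * (M : ℂ) - 2)))⁻¹ • v := by
    have h1 := congrArg (KtotInv N h αl αr) hK
    rw [ktotinv_ktot, map_smul] at h1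
    have h2 : (Complex.exp (h * (αl + αr + (N : ℂ) - 2 * (M : ℂ) - 2)))⁻¹ • v
        = KtotInv N h αl αr v := by
      conv_lhs => rw [h1]
      rw [smul_smul, inv_mul_cancel₀ hc0, one_smul]
    exact h2.symm
  have hC : Casimir2b N h αl αr v
      = (Complex.exp h * Complex.exp (h * (αl + αr + (N : ℂ) - 2 * (M : ℂ) - 2))
          + Complex.exp (-h) *
            (Complex.exp (h * (αl + αr + (N : ℂ) - 2 * (M : ℂ) - 2)))⁻¹) • v := by
    simp only [Casimir2b, LinearMap.add_apply, LinearMap.smul_apply, Module.End.mul_apply,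
      hE, map_zero, smul_zero, hK, hKinv, zero_add, smul_smul, add_smul]
  rw [hC, ← sub_smul, smul_smul]
  congr 1
  have e1 : Complex.exp (h * (αl + αr + 1))
      = Complex.exp (h * ((M : ℂ) + 1 - (N : ℂ) / 2)) *
        Complex.exp (h * (αl + αr - (M : ℂ) + (N : ℂ) / 2)) := by
    rw [← Complex.exp_add]; congr 1; ring
  have e2 : Complex.exp (-(h * (αl + αr + 1)))
      = (Complex.exp (h * ((M : ℂ) + 1 - (N : ℂ) / 2)) *
          Complex.exp (h * (αl + αr - (M : ℂ) + (N : ℂ) / 2)))⁻¹ := by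
    rw [Complex.exp_neg, e1]
  have e3 : Complex.exp h * Complex.exp (h * (αl + αr + (N : ℂ) - 2 * (M : ℂ) - 2))
      = Complex.exp (h * (αl + αr - (M : ℂ) + (N : ℂ) / 2)) /
          Complex.exp (h * ((M : ℂ) + 1 - (N : ℂ) / 2)) := by
    rw [← Complex.exp_add, ← Complex.exp_sub]; congr 1; ring
  have e4 : Complex.exp (-h) *
        (Complex.exp (h * (αl + αr + (N : ℂ) - 2 * (M : ℂ) - 2)))⁻¹
      = (Complex.exp (h * (αl + αr - (M : ℂ) + (N : ℂ) / 2)) /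
          Complex.exp (h * ((M : ℂ) + 1 - (N : ℂ) / 2)))⁻¹ := by
    rw [Complex.exp_neg, ← mul_inv, e3]
  have eL : Complex.exp (-(h * αl)) = (Complex.exp (h * αl))⁻¹ := Complex.exp_neg _
  have eR : Complex.exp (-(h * αr)) = (Complex.exp (h * αr))⁻¹ := Complex.exp_neg _
  have eA : Complex.exp (-(h * ((M : ℂ) + 1 - (N : ℂ) / 2)))
      = (Complex.exp (h * ((M : ℂ) + 1 - (N : ℂ) / 2)))⁻¹ := Complex.exp_neg _
  have eB : Complex.exp (-(h * (αl + αr - (M : ℂ) + (N : ℂ) / 2)))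
      = (Complex.exp (h * (αl + αr - (M : ℂ) + (N : ℂ) / 2)))⁻¹ := Complex.exp_neg _
  have eQ : Complex.exp (-h) = (Complex.exp h)⁻¹ := Complex.exp_neg _
  have hL' : Complex.exp (h * αl) - (Complex.exp (h * αl))⁻¹ ≠ 0 :=
    sub_ne_zero.mpr (by rw [← eL]; exact hαl)
  have hR' : Complex.exp (h * αr) - (Complex.exp (h * αr))⁻¹ ≠ 0 :=
    sub_ne_zero.mpr (by rw [← eR]; exact hαr)
  have hQ' : Complex.exp h - (Complex.exp h)⁻¹ ≠ 0 := by
    intro hQQ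
    apply hq
    have hQ0 : Complex.exp h ≠ 0 := Complex.exp_ne_zero _
    have h2 : Complex.exp h = (Complex.exp h)⁻¹ := sub_eq_zero.mp hQQ
    rw [sq]
    nth_rewrite 2 [h2]
    exact mul_inv_cancel₀ hQ0
  rw [e1, e2, e3, e4]
  simp only [qnum, eL, eR, eA, eB, eQ]
  exact scalar_id _ _ _ _ _ (Complex.exp_ne_zero _) (Complex.exp_ne_zero _) hL' hR' hQ'
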